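/- Let f : X → Y be a continuous closed map between metrizable spaces. Then the set { x ∈ X : f⁻¹(f(x)) = {x} } of points at which f is one-to-one is a Gδ subset of X. -/

import Mathlib

set_option linter.unnecessarySimpa false

open ENNReal

theorem isGdelta_injectivity_points {X Y : Type*} [TopologicalSpace X]
    [TopologicalSpace Y] [TopologicalSpace.MetrizableSpace X] [TopologicalSpace.MetrizableSpace Y]
    (f : X → Y) (hf : Continuous f) (hfc : IsClosedMap f) :
    IsGδ {x : X | f ⁻¹' {f x} = {x}} := by
  letI : MetricSpace X := TopologicalSpace.metrizableSpaceMetric X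
  set U : ℕ → Set X := fun n => {x : X | EMetric.diam (f ⁻¹' {f x}) < ((n : ℝ≥0∞) + 1)⁻¹}
    with hU
  have hεpos : ∀ n : ℕ, (0 : ℝ≥0∞) < ((n : ℝ≥0∞) + 1)⁻¹ := fun n => by
    simp [ENNReal.inv_pos]
  have hεne : ∀ n : ℕ, ((n : ℝ≥0∞) + 1)⁻¹ ≠ ∞ := fun n => by
    simp
  have key : {x : X | f ⁻¹' {f x} = {x}} = ⋂ n : ℕ, U n := by
    ext x
    simp only [Set.mem_iInter, Set.mem_setOf_eq, hU]
    constructor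
    · intro h n
      rw [h]
      exact lt_of_le_of_lt (le_of_eq EMetric.diam_singleton) (hεpos n)
    · intro h
      have h0 : EMetric.diam (f ⁻¹' {f x}) = 0 := by
        by_contra h0
        obtain ⟨n, hn⟩ := ENNReal.exists_inv_nat_lt h0
        have h1 : ((n : ℝ≥0∞) + 1)⁻¹ ≤ ((n : ℝ≥0∞))⁻¹ :=
          ENNReal.inv_le_inv.2 (by simp)
        exact absurd hn (not_lt.2 ((h n).le.trans h1))
      have hsub : (f ⁻¹' {f x}).Subsingleton := EMetric.diam_eq_zero_iff.1 h0
      ext z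
      simp only [Set.mem_preimage, Set.mem_singleton_iff]
      constructor
      · intro hz
        exact hsub hz rfl
      · intro hz
        rw [hz]
  rw [key]
  apply IsGδ.iInter
  intro n
  apply IsOpen.isGδ
  rw [isOpen_iff_mem_nhds]
  intro x hx
  set ε : ℝ≥0∞ := ((n : ℝ≥0∞) + 1)⁻¹
  set F : Set X := f ⁻¹' {f x} with hF
  have hd : EMetric.diam F < ε := hx
  have hdne : EMetric.diam F ≠ ∞ := (hd.trans_le le_top).ne
  -- choose δ
  set δ : ℝ≥0∞ := (ε - EMetric.diam F) / 3 with hδ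
  have hδpos : 0 < δ := by
    apply ENNReal.div_pos
    · exact (tsub_pos_of_lt hd).ne'
    · norm_num
  have hδne : δ ≠ ∞ :=
    (ENNReal.div_lt_top (tsub_le_self.trans_lt (lt_top_iff_ne_top.2 (hεne n))).ne
      (by norm_num)).ne
  have hsum : EMetric.diam F + δ + δ < ε := by
    have h3 : δ + δ < 3 * δ := by
      have : δ + δ + δ = 3 * δ := by ring
      calc δ + δ < δ + δ + δ := by
              exact ENNReal.lt_add_right (by finiteness) hδpos.ne'
        _ = 3 * δ := this
    have h3δ : 3 * δ ≤ ε - EMetric.diam F := by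
      rw [hδ, ENNReal.mul_div_cancel'] <;> norm_num
    calc EMetric.diam F + δ + δ = EMetric.diam F + (δ + δ) := by ring
      _ < EMetric.diam F + 3 * δ := ENNReal.add_lt_add_left hdne h3
      _ ≤ EMetric.diam F + (ε - EMetric.diam F) := by exact add_le_add le_rfl h3δ
      _ = ε := add_tsub_cancel_of_le hd.le
  set W : Set X := ⋃ z ∈ F, EMetric.ball z δ with hW
  have hWopen : IsOpen W := isOpen_biUnion fun z _ => EMetric.isOpen_ball
  have hFW : F ⊆ W := fun z hz => Set.mem_biUnion hz (EMetric.mem_ball_self hδpos)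
  have hWdiam : EMetric.diam W ≤ EMetric.diam F + δ + δ := by
    apply EMetric.diam_le
    intro a ha b hb
    obtain ⟨za, hza, haz⟩ := by simpa [hW] using ha
    obtain ⟨zb, hzb, hbz⟩ := by simpa [hW] using hb
    calc edist a b ≤ edist a za + edist za zb + edist zb b := edist_triangle4 a za zb b
      _ ≤ δ + EMetric.diam F + δ :=
          add_le_add (add_le_add haz.le (EMetric.edist_le_diam_of_mem hza hzb))
            (edist_comm zb b ▸ hbz.le)
      _ = EMetric.diam F + δ + δ := by ring
  have hcl : IsClosed (f '' Wᶜ) := hfc _ hWopen.isClosed_compl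
  have hxmem : f x ∈ (f '' Wᶜ)ᶜ := by
    rintro ⟨z, hz, hfz⟩
    exact hz (hFW (by simp [hF, hfz]))
  have hmem : f ⁻¹' (f '' Wᶜ)ᶜ ∈ nhds x :=
    (hcl.isOpen_compl.preimage hf).mem_nhds hxmem
  apply Filter.mem_of_superset hmem
  intro x' hx'
  have hfib : f ⁻¹' {f x'} ⊆ W := by
    intro z hz
    by_contra hzW
    exact hx' ⟨z, hzW, by simpa using hz⟩
  show EMetric.diam (f ⁻¹' {f x'}) < ε
  exact lt_of_le_of_lt (le_trans (EMetric.diam_mono hfib) hWdiam) hsum
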